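/- Let τ be a tree on n vertices such that the number Q_{2k}(τ) of unordered pairs of vertices at distance at most 2k satisfies Q_{2k}(τ) < n²/(2k) − n/2. Then the vertex set of τ cannot be partitioned into k sets each of diameter at most 2k; in particular the covering number b̂(τ) and hence the burning number b(τ) satisfy b(τ) ≥ b̂(τ) ≥ k + 1. -/

import Mathlib

open SimpleGraph
open scoped Classical

/-- Burning number: least `k` such that there are fire sources `v₀,…,v_{k-1}` with
`⋃_{r=0}^{k-1} B_r(v_r) = V`. -/
noncomputable def burningNumber (V : Type*) [Fintype V] (G : SimpleGraph V) : ℕ :=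
  sInf {k | ∃ v : Fin k → V, ∀ u : V, ∃ r : Fin k, G.dist (v r) u ≤ (r : ℕ)}

/-- Covering number `b̂`: least `k` such that `k` balls of radius `k` cover `V`. -/
noncomputable def coverNumber (V : Type*) [Fintype V] (G : SimpleGraph V) : ℕ :=
  sInf {k | ∃ v : Fin k → V, ∀ u : V, ∃ i : Fin k, G.dist (v i) u ≤ k}

theorem pair_count_lower_bound_burning {V : Type*} [Fintype V] (G : SimpleGraph V)
    (hG : G.IsTree) (n k : ℕ) (hn : Fintype.card V = n) (hk : 1 ≤ k)
    (hQ : ((Finset.univ.offDiag.filter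
        (fun p : V × V => G.dist p.1 p.2 ≤ 2 * k)).card : ℝ) / 2
        < (n : ℝ) ^ 2 / (2 * k) - n / 2) :
    (¬ ∃ U : Fin k → Finset V, (∀ v : V, ∃ j, v ∈ U j) ∧
        ∀ j, ∀ u ∈ U j, ∀ v ∈ U j, G.dist u v ≤ 2 * k) ∧
      k + 1 ≤ coverNumber V G ∧ coverNumber V G ≤ burningNumber V G := by
  have hkR : (0:ℝ) < k := by exact_mod_cast hk
  set B := Finset.univ.offDiag.filter (fun p : V × V => G.dist p.1 p.2 ≤ 2 * k) with hBdef
  -- n is positive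
  have hn0 : 0 < n := by
    rcases Nat.eq_zero_or_pos n with h | h
    · subst h
      have : IsEmpty V := Fintype.card_eq_zero_iff.mp hn
      have hBe : B = ∅ := by
        rw [hBdef, Finset.univ_eq_empty]
        simp
      rw [hBe] at hQ
      norm_num at hQ
    · exact h
  have hne : Nonempty V := Fintype.card_pos_iff.mp (hn ▸ hn0)
  -- Main part: no cover by k sets of diameter ≤ 2k
  have hmain : ¬ ∃ U : Fin k → Finset V, (∀ v : V, ∃ j, v ∈ U j) ∧
      ∀ j, ∀ u ∈ U j, ∀ v ∈ U j, G.dist u v ≤ 2 * k := by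
    rintro ⟨U, hcov, hdiam⟩
    choose f hf using hcov
    set P : Fin k → Finset V := fun j => Finset.univ.filter (fun v => f v = j) with hP
    have hsum : ∑ j, (P j).card = n := by
      rw [← hn, ← Finset.card_univ (α := V)]
      exact (Finset.card_eq_sum_card_fiberwise (fun x _ => Finset.mem_univ (f x))).symm
    set T : Finset (V × V) := Finset.univ.filter (fun p : V × V => f p.1 = f p.2) with hT
    have hTcard : T.card = ∑ j, (P j).card ^ 2 := by
      have hTeq : T = Finset.univ.biUnion (fun j : Fin k => P j ×ˢ P j) := by
        ext p
        simp only [hT, hP, Finset.mem_filter, Finset.mem_univ, true_and,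
          Finset.mem_biUnion, Finset.mem_product]
        constructor
        · intro h
          exact ⟨f p.2, h, rfl⟩
        · rintro ⟨j, h1, h2⟩
          exact h1.trans h2.symm
      rw [hTeq, Finset.card_biUnion]
      · refine Finset.sum_congr rfl fun j _ => ?_
        rw [Finset.card_product, sq]
      · intro i _ j _ hij
        rw [Function.onFun, Finset.disjoint_left]
        rintro ⟨a, b⟩ hi hj
        simp only [hP, Finset.mem_product, Finset.mem_filter, Finset.mem_univ, true_and] at hi hj
        exact hij (hi.1 ▸ hj.1 ▸ rfl)
    -- T splits into diagonal and off-diagonal parts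
    set A : Finset (V × V) := Finset.univ.offDiag.filter (fun p : V × V => f p.1 = f p.2)
      with hA
    have hTsplit : T.card = A.card + n := by
      have hTu : T = A ∪ (Finset.univ : Finset V).diag := by
        ext p
        simp only [hT, hA, Finset.mem_filter, Finset.mem_univ, true_and, Finset.mem_union,
          Finset.mem_offDiag, Finset.mem_diag]
        constructor
        · intro h
          by_cases hp : p.1 = p.2
          · exact Or.inr hp
          · exact Or.inl ⟨hp, h⟩
        · rintro (⟨-, h⟩ | h)
          exacts [h, by rw [h]]
      have hdisj : Disjoint A (Finset.univ : Finset V).diag := by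
        rw [Finset.disjoint_left]
        intro p hp hp'
        simp only [hA, Finset.mem_filter, Finset.mem_offDiag, Finset.mem_univ, true_and] at hp
        simp only [Finset.mem_diag, Finset.mem_univ, true_and] at hp'
        exact hp.1 hp'
      rw [hTu, Finset.card_union_of_disjoint hdisj, Finset.diag_card, Finset.card_univ, hn]
    have hAB : A ⊆ B := by
      intro p hp
      simp only [hA, Finset.mem_filter] at hp
      have hp1 : p.1 ∈ U (f p.2) := hp.2 ▸ hf p.1
      have hp2 : p.2 ∈ U (f p.2) := hf p.2
      simp only [hBdef, Finset.mem_filter]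
      exact ⟨hp.1, hdiam _ _ hp1 _ hp2⟩
    have hcardAB : A.card ≤ B.card := Finset.card_le_card hAB
    -- Cauchy–Schwarz over ℝ
    have hCS : (n : ℝ) ^ 2 ≤ (k : ℝ) * ∑ j, ((P j).card : ℝ) ^ 2 := by
      have := sq_sum_le_card_mul_sum_sq (s := (Finset.univ : Finset (Fin k)))
        (f := fun j => ((P j).card : ℝ))
      simpa [hsum, ← Nat.cast_sum] using this
    have hS : ∑ j, ((P j).card : ℝ) ^ 2 ≤ (B.card : ℝ) + n := by
      have : ∑ j, (P j).card ^ 2 ≤ B.card + n := by omega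
      exact_mod_cast this
    -- derive contradiction
    have h2k : (0:ℝ) < 2 * k := by positivity
    have hform : (n : ℝ) ^ 2 / (2 * k) - (n : ℝ) / 2 = ((n:ℝ)^2 - n * k) / (2 * k) := by
      field_simp
    rw [hform, div_lt_div_iff₀ (by norm_num) h2k] at hQ
    nlinarith [mul_le_mul_of_nonneg_left hS (le_of_lt hkR)]
  -- n belongs to the burning set
  have hnburn : n ∈ {m | ∃ v : Fin m → V, ∀ u : V, ∃ r : Fin m, G.dist (v r) u ≤ (r : ℕ)} := by
    obtain e := Fintype.equivFinOfCardEq hn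
    exact ⟨fun i => e.symm i, fun u => ⟨e u, by simp [SimpleGraph.dist_self]⟩⟩
  have hncov : n ∈ {m | ∃ v : Fin m → V, ∀ u : V, ∃ i : Fin m, G.dist (v i) u ≤ m} := by
    obtain ⟨v, hv⟩ := hnburn
    exact ⟨v, fun u => (hv u).imp fun r hr => hr.trans (le_of_lt r.2)⟩
  refine ⟨hmain, ?_, ?_⟩
  · -- k + 1 ≤ coverNumber
    have hall : ∀ m : ℕ, (∃ v : Fin m → V, ∀ u : V, ∃ i : Fin m, G.dist (v i) u ≤ m) →
        k + 1 ≤ m := by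
      intro m hmS
      by_contra hcon
      push_neg at hcon
      have hmk : m ≤ k := by omega
      obtain ⟨v, hv⟩ := hmS
      have hm0 : 0 < m := by
        rcases Nat.eq_zero_or_pos m with h | h
        · subst h
          obtain ⟨i, -⟩ := hv (Classical.arbitrary V)
          exact absurd i.isLt (by omega)
        · exact h
      set w : Fin k → V := fun i => if h : (i : ℕ) < m then v ⟨i, h⟩ else v ⟨0, hm0⟩ with hw
      refine hmain ⟨fun i => Finset.univ.filter (fun u => G.dist (w i) u ≤ k), ?_, ?_⟩
      · intro u
        obtain ⟨i, hi⟩ := hv u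
        refine ⟨⟨i, lt_of_lt_of_le i.2 hmk⟩, ?_⟩
        simp only [Finset.mem_filter, Finset.mem_univ, true_and, hw]
        have hlt : (i : ℕ) < m := i.2
        rw [dif_pos hlt]
        have hvi : G.dist (v ⟨(i : ℕ), hlt⟩) u ≤ m := by
          simpa using hi
        exact le_trans hvi hmk
      · intro j u hu x hx
        simp only [Finset.mem_filter, Finset.mem_univ, true_and] at hu hx
        calc G.dist u x ≤ G.dist u (w j) + G.dist (w j) x := hG.isConnected.dist_triangle
          _ ≤ k + k := by rw [SimpleGraph.dist_comm]; exact add_le_add hu hx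
          _ = 2 * k := by ring
    exact hall _ (Nat.sInf_mem ⟨n, hncov⟩)
  · -- coverNumber ≤ burningNumber
    have hmem := Nat.sInf_mem (⟨n, hnburn⟩ : Set.Nonempty
      {m | ∃ v : Fin m → V, ∀ u : V, ∃ r : Fin m, G.dist (v r) u ≤ (r : ℕ)})
    obtain ⟨v, hv⟩ := hmem
    exact Nat.sInf_le ⟨v, fun u => (hv u).imp fun r hr => hr.trans (le_of_lt r.2)⟩
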